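/- For the sequential greedy with full information (each agent i conditions on all previously selected actions) on a normalized, non-decreasing submodular f with one action per agent, the following per-step domination holds: f(s_i | {s_1,…,s_{i−1}}) ≥ f(s_i* | {s_1,…,s_{i−1}}) for every i, where s_i* is agent i's action in an optimal solution; summing and using submodularity yields f(S^greedy) ≥ f(S*) − f(S^greedy), i.e., the 1/2 bound. -/

import Mathlib

/-- Per-step domination for the full-information sequential greedy: for each `i`,
`f(s_i | {s_1,…,s_{i-1}}) ≥ f(s_i* | {s_1,…,s_{i-1}})` where `s*` is any feasible
(in particular an optimal) selection; and consequently
`f(S^greedy) ≥ f(S*) - f(S^greedy)`, i.e., the 1/2 bound. -/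
theorem greedy_per_step_domination {α : Type*} [DecidableEq α] [Fintype α] (n : ℕ)
    (Vs : Fin n → Finset α)
    (hne : ∀ i, (Vs i).Nonempty)
    (hdisjV : ∀ i j : Fin n, i ≠ j → Disjoint (Vs i) (Vs j))
    (f : Finset α → ℝ)
    (hnorm : f ∅ = 0)
    (hmono : ∀ A B : Finset α, A ⊆ B → f A ≤ f B)
    (hsub : ∀ (A B : Finset α) (s : α), A ⊆ B →
      f (insert s B) - f B ≤ f (insert s A) - f A)
    (s : Fin n → α) (hs : ∀ i, s i ∈ Vs i)
    (hgreedy : ∀ i : Fin n, ∀ y ∈ Vs i,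
      f (insert y ((Finset.univ.filter (fun j => j < i)).image s))
        - f ((Finset.univ.filter (fun j => j < i)).image s)
      ≤ f (insert (s i) ((Finset.univ.filter (fun j => j < i)).image s))
        - f ((Finset.univ.filter (fun j => j < i)).image s))
    (sopt : Fin n → α) (hsopt : ∀ i, sopt i ∈ Vs i) :
    (∀ i : Fin n,
      f (insert (sopt i) ((Finset.univ.filter (fun j => j < i)).image s))
        - f ((Finset.univ.filter (fun j => j < i)).image s)
      ≤ f (insert (s i) ((Finset.univ.filter (fun j => j < i)).image s))
        - f ((Finset.univ.filter (fun j => j < i)).image s)) ∧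
    f (Finset.univ.image sopt) - f (Finset.univ.image s) ≤ f (Finset.univ.image s) := by
  refine ⟨fun i => hgreedy i (sopt i) (hsopt i), ?_⟩
  set S : Finset α := Finset.univ.image s with hS
  -- prefix sets
  set A : ℕ → Finset α := fun k => (Finset.univ.filter (fun j : Fin n => (j : ℕ) < k)).image sopt with hA
  set P : ℕ → Finset α := fun k => (Finset.univ.filter (fun j : Fin n => (j : ℕ) < k)).image s with hP
  have key : ∀ k, k ≤ n → f (S ∪ A k) ≤ f S + f (P k) := by
    intro k
    induction k with
    | zero =>
      intro _
      have hA0 : A 0 = ∅ := by simp [hA]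
      have hP0 : P 0 = ∅ := by simp [hP]
      simp [hA0, hP0, hnorm]
    | succ k ih =>
      intro hk
      have hk' : k < n := hk
      set i : Fin n := ⟨k, hk'⟩ with hi
      have hfilter : ∀ (g : Fin n → α),
          (Finset.univ.filter (fun j : Fin n => (j : ℕ) < k + 1)).image g
            = insert (g i) ((Finset.univ.filter (fun j : Fin n => (j : ℕ) < k)).image g) := by
        intro g
        have : (Finset.univ.filter (fun j : Fin n => (j : ℕ) < k + 1))
            = insert i (Finset.univ.filter (fun j : Fin n => (j : ℕ) < k)) := by
          ext j
          simp [Nat.lt_succ_iff_lt_or_eq, Fin.ext_iff, hi, or_comm]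
          constructor <;> intro h <;> omega
        rw [this, Finset.image_insert]
      have hAk1 : A (k + 1) = insert (sopt i) (A k) := hfilter sopt
      have hPk1 : P (k + 1) = insert (s i) (P k) := hfilter s
      have hPeq : (Finset.univ.filter (fun j : Fin n => j < i)).image s = P k := by
        simp [hP, hi, Fin.lt_def]
      have h1 : f (insert (sopt i) (S ∪ A k)) - f (S ∪ A k)
          ≤ f (insert (sopt i) S) - f S :=
        hsub S (S ∪ A k) (sopt i) Finset.subset_union_left
      have hPS : P k ⊆ S := by
        intro x hx
        simp only [hP, Finset.mem_image, Finset.mem_filter] at hx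
        obtain ⟨j, _, rfl⟩ := hx
        exact Finset.mem_image_of_mem s (Finset.mem_univ j)
      have h2 : f (insert (sopt i) S) - f S ≤ f (insert (sopt i) (P k)) - f (P k) :=
        hsub (P k) S (sopt i) hPS
      have h3 : f (insert (sopt i) (P k)) - f (P k)
          ≤ f (insert (s i) (P k)) - f (P k) := by
        have := hgreedy i (sopt i) (hsopt i)
        rwa [hPeq] at this
      have ih' := ih (Nat.le_of_succ_le hk)
      calc f (S ∪ A (k + 1)) = f (insert (sopt i) (S ∪ A k)) := by
            rw [hAk1, Finset.union_insert]
        _ ≤ f (S ∪ A k) + (f (insert (s i) (P k)) - f (P k)) := by linarith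
        _ ≤ f S + f (P k) + (f (insert (s i) (P k)) - f (P k)) := by linarith
        _ = f S + f (P (k + 1)) := by rw [hPk1]; ring
  have hAn : A n = Finset.univ.image sopt := by
    have : (Finset.univ.filter (fun j : Fin n => (j : ℕ) < n)) = Finset.univ := by
      ext j; simp [j.isLt]
    simp [hA, this]
  have hPn : P n = S := by
    have : (Finset.univ.filter (fun j : Fin n => (j : ℕ) < n)) = Finset.univ := by
      ext j; simp [j.isLt]
    simp [hP, hS, this]
  have := key n le_rfl
  rw [hAn, hPn] at this
  have hm : f (Finset.univ.image sopt) ≤ f (S ∪ Finset.univ.image sopt) :=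
    hmono _ _ Finset.subset_union_right
  linarith
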